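/- Let F and G be locally finite pointed graphs (graphs with a distinguished basepoint vertex) with G connected. If every connected finite pointed subgraph Ĝ of G admits a pointed embedding into F, then G admits a pointed embedding into F. -/

import Mathlib

open SimpleGraph

/-- `G` embeds into `H`: an injective graph homomorphism (not necessarily induced). -/
def EmbedsIn {α β : Type*} (G : SimpleGraph α) (H : SimpleGraph β) : Prop :=
  ∃ f : G →g H, Function.Injective f

/-- `G` is self-embeddable: it admits an injective adjacency-preserving self-map whose
image, as a subgraph, is a proper subgraph (strictly smaller edge set). -/
def SelfEmbeddable {α : Type*} (G : SimpleGraph α) : Prop :=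
  ∃ f : G →g G, Function.Injective f ∧ Sym2.map f '' G.edgeSet ⊂ G.edgeSet

/-- `G` is strongly self-embeddable: `G` embeds into `G - v` for every vertex `v`. -/
def StronglySelfEmbeddable {α : Type*} (G : SimpleGraph α) : Prop :=
  ∀ v : α, EmbedsIn G (G.induce ({v}ᶜ : Set α))

/-- The subgraph of `F` consisting of the edges with color `b` under coloring `c`. -/
def colorSubgraph {α : Type*} (F : SimpleGraph α) (c : Sym2 α → Bool) (b : Bool) :
    SimpleGraph α where
  Adj x y := F.Adj x y ∧ c s(x, y) = b
  symm := by
    refine ⟨?_⟩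
    intro x y h
    exact ⟨h.1.symm, by rw [Sym2.eq_swap]; exact h.2⟩
  loopless := by refine ⟨?_⟩; intro x h; exact F.irrefl h.1

/-- `F → (G, H)` : every red-blue coloring of the edges of `F` yields a red copy of `G`
or a blue copy of `H` (here `true` = red, `false` = blue). -/
def Arrows {α β γ : Type*} (F : SimpleGraph α) (G : SimpleGraph β) (H : SimpleGraph γ) : Prop :=
  ∀ c : Sym2 α → Bool,
    EmbedsIn G (colorSubgraph F c true) ∨ EmbedsIn H (colorSubgraph F c false)

/-- `F` is `(G,H)`-minimal: it arrows `(G,H)` but no proper subgraph of it does. -/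
def RamseyMinimal {α β γ : Type*} (F : SimpleGraph α) (G : SimpleGraph β)
    (H : SimpleGraph γ) : Prop :=
  Arrows F G H ∧ ∀ F' : SimpleGraph α, F' < F → ¬ Arrows F' G H

/-- `G` has no isolated vertices. -/
def NoIsolated {α : Type*} (G : SimpleGraph α) : Prop := ∀ v, ∃ w, G.Adj v w

/-- The single-edge graph `K₂`. -/
def K2 : SimpleGraph (Fin 2) := ⊤

/-- The matching `nK₂` with `n` pairwise disjoint edges. -/
def Matching (n : ℕ) : SimpleGraph (Fin n × Fin 2) where
  Adj a b := a.1 = b.1 ∧ a.2 ≠ b.2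
  symm := by refine ⟨?_⟩; intro a b h; exact ⟨h.1.symm, h.2.symm⟩
  loopless := by refine ⟨?_⟩; intro a h; exact h.2 rfl

/-- The disjoint union `nG` of `n` copies of `G`. -/
def nCopies {V : Type*} (n : ℕ) (G : SimpleGraph V) : SimpleGraph (Fin n × V) where
  Adj a b := a.1 = b.1 ∧ G.Adj a.2 b.2
  symm := by refine ⟨?_⟩; intro a b h; exact ⟨h.1.symm, h.2.symm⟩
  loopless := by refine ⟨?_⟩; intro a h; exact G.irrefl h.2

/-- The infinite star `S_∞ = K_{1,∞}`, with center `none`. -/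
def InfStar : SimpleGraph (Option ℕ) := SimpleGraph.fromRel (fun a _ => a = none)

/-- The finite star `K_{1,n}`, with center `none`. -/
def StarN (n : ℕ) : SimpleGraph (Option (Fin n)) := SimpleGraph.fromRel (fun a _ => a = none)

/-- The ray `P_∞` (one-way infinite path) on `ℕ`. -/
def Ray : SimpleGraph ℕ := SimpleGraph.fromRel (fun a b => b = a + 1)

/-- The `k`-ray `P_{k∞}`: `k` rays glued at a common endpoint `none`. -/
def kRay (k : ℕ) : SimpleGraph (Option (Fin k × ℕ)) :=
  SimpleGraph.fromRel (fun a b =>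
    (a = none ∧ ∃ i, b = some (i, 0)) ∨ (∃ i n, a = some (i, n) ∧ b = some (i, n + 1)))
open CategoryTheory Opposite

namespace Stmt3Aux

variable {V W : Type} (G : SimpleGraph V) (F : SimpleGraph W)

/-- Ball of radius `n` around `p`. -/
def ball (p : V) (n : ℕ) : Set V := {v | G.Reachable p v ∧ G.dist p v ≤ n}

lemma self_mem_ball (p : V) (n : ℕ) : p ∈ ball G p n :=
  ⟨Reachable.refl p, by simp [SimpleGraph.dist_self]⟩

lemma ball_mono {p : V} {m n : ℕ} (h : m ≤ n) : ball G p m ⊆ ball G p n :=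
  fun _ hv => ⟨hv.1, hv.2.trans h⟩

lemma exists_walk_getVert {p v : V} (w : G.Walk p v) (i : ℕ) :
    ∃ q : G.Walk p (w.getVert i), q.length ≤ i := by
  induction w generalizing i with
  | nil => exact ⟨Walk.nil, Nat.zero_le _⟩
  | cons h q ih =>
    cases i with
    | zero => exact ⟨Walk.nil, le_rfl⟩
    | succ i =>
      obtain ⟨r, hr⟩ := ih i
      exact ⟨Walk.cons h r, by simpa using Nat.succ_le_succ hr⟩

lemma exists_pred {p v : V} {n : ℕ} (hr : G.Reachable p v) (hd : G.dist p v = n + 1) :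
    ∃ u, G.Adj u v ∧ G.Reachable p u ∧ G.dist p u ≤ n := by
  obtain ⟨w, hw⟩ := hr.exists_walk_length_eq_dist
  have hlen : w.length = n + 1 := hw.trans hd
  have hadj : G.Adj (w.getVert n) (w.getVert (n + 1)) :=
    w.adj_getVert_succ (by omega)
  have hv : w.getVert (n + 1) = v := by
    rw [← hlen]; exact w.getVert_length
  rw [hv] at hadj
  obtain ⟨q, hq⟩ := exists_walk_getVert G w n
  exact ⟨w.getVert n, hadj, ⟨q⟩, (SimpleGraph.dist_le q).trans hq⟩

lemma ball_finite (hlf : ∀ v, (G.neighborSet v).Finite) (p : V) (n : ℕ) :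
    (ball G p n).Finite := by
  induction n with
  | zero =>
    refine Set.Finite.subset (Set.finite_singleton p) (fun v hv => ?_)
    have : p = v := hv.1.dist_eq_zero_iff.mp (Nat.le_zero.mp hv.2)
    simp [this]
  | succ n ih =>
    refine Set.Finite.subset (ih.union (ih.biUnion (fun u _ => hlf u))) (fun v hv => ?_)
    rcases Nat.lt_or_ge (G.dist p v) (n + 1) with hlt | hge
    · exact Or.inl ⟨hv.1, Nat.lt_succ_iff.mp hlt⟩
    · obtain ⟨u, hadj, hru, hdu⟩ := exists_pred G hv.1 (le_antisymm hv.2 hge)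
      exact Or.inr (Set.mem_biUnion ⟨hru, hdu⟩ hadj)

/-- The induced subgraph on the ball. -/
def ballSub (p : V) (n : ℕ) : G.Subgraph := (⊤ : G.Subgraph).induce (ball G p n)

lemma pG_mem (p : V) (n : ℕ) : p ∈ (ballSub G p n).verts := self_mem_ball G p n

lemma walk_in_ball (p : V) (n : ℕ) :
    ∀ d (v : V) (hv : v ∈ ball G p n), G.dist p v = d →
      ∃ w : (ballSub G p n).coe.Walk ⟨p, pG_mem G p n⟩ ⟨v, hv⟩, w.length ≤ d := by
  intro d
  induction d using Nat.strong_induction_on with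
  | _ d ih =>
    intro v hv hd
    cases d with
    | zero =>
      obtain rfl : p = v := hv.1.dist_eq_zero_iff.mp hd
      exact ⟨Walk.nil, Nat.zero_le _⟩
    | succ k =>
      obtain ⟨u, hadj, hru, hdu⟩ := exists_pred G hv.1 hd
      have hkn : k + 1 ≤ n := hd ▸ hv.2
      have hun : u ∈ ball G p n := ⟨hru, hdu.trans (by omega : k ≤ n)⟩
      obtain ⟨q, hq⟩ := ih (G.dist p u) (by omega) u hun rfl
      have hadj' : (ballSub G p n).coe.Adj ⟨u, hun⟩ ⟨v, hv⟩ := ⟨hun, hv, by simpa using hadj⟩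
      exact ⟨q.concat hadj', by rw [Walk.length_concat]; omega⟩

lemma ballSub_connected (p : V) (n : ℕ) : (ballSub G p n).coe.Connected := by
  rw [connected_iff]
  refine ⟨fun a b => ?_, ⟨⟨p, pG_mem G p n⟩⟩⟩
  have ha : (ballSub G p n).coe.Reachable ⟨p, pG_mem G p n⟩ a := by
    obtain ⟨w, -⟩ := walk_in_ball G p n (G.dist p a.1) a.1 a.2 rfl
    exact ⟨w⟩
  have hb : (ballSub G p n).coe.Reachable ⟨p, pG_mem G p n⟩ b := by
    obtain ⟨w, -⟩ := walk_in_ball G p n (G.dist p b.1) b.1 b.2 rfl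
    exact ⟨w⟩
  exact ha.symm.trans hb

/-- Restriction of a hom on a larger ball to a smaller one. -/
def restrict (p : V) {m n : ℕ} (h : n ≤ m) (f : (ballSub G p m).coe →g F) :
    (ballSub G p n).coe →g F where
  toFun := fun a => f ⟨a.1, ball_mono G h a.2⟩
  map_rel' := fun hab => f.map_rel' ⟨ball_mono G h hab.1, ball_mono G h hab.2.1, hab.2.2⟩

end Stmt3Aux

/-- If every connected finite pointed subgraph of a connected, locally finite pointed
graph `G` admits a pointed embedding into a locally finite pointed graph `F`, then so
does `G`. -/
theorem stmt3 {V W : Type} (G : SimpleGraph V) (F : SimpleGraph W) (pG : V) (pF : W)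
    (hlfG : ∀ v, (G.neighborSet v).Finite) (hlfF : ∀ w, (F.neighborSet w).Finite)
    (hconn : G.Connected)
    (h : ∀ S : G.Subgraph, S.verts.Finite → S.coe.Connected → ∀ hp : pG ∈ S.verts,
      ∃ f : S.coe →g F, Function.Injective f ∧ f ⟨pG, hp⟩ = pF) :
    ∃ f : G →g F, Function.Injective f ∧ f pG = pF := by
  classical
  let Emb : ℕ → Type := fun n =>
    {f : (Stmt3Aux.ballSub G pG n).coe →g F //
      Function.Injective f ∧ f ⟨pG, Stmt3Aux.pG_mem G pG n⟩ = pF}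
  let Fn : ℕᵒᵖ ⥤ Type :=
    { obj := fun n => Emb n.unop
      map := fun {m n} φ => TypeCat.ofHom fun f =>
        ⟨Stmt3Aux.restrict G F pG (leOfHom φ.unop) f.1,
          fun a b hab => by
            have h2 := f.2.1 hab
            have h3 := congrArg Subtype.val h2
            exact Subtype.ext h3,
          f.2.2⟩
      map_id := fun _ => rfl
      map_comp := fun _ _ => rfl }
  haveI hFin : ∀ n : ℕᵒᵖ, Finite (Fn.obj n) := by
    intro n
    show Finite (Emb n.unop)
    set k := n.unop with hk
    have himg : ∀ (f : Emb k) (a : ↥(Stmt3Aux.ballSub G pG k).verts),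
        f.1 a ∈ Stmt3Aux.ball F pF k := by
      intro f a
      obtain ⟨w, hw⟩ := Stmt3Aux.walk_in_ball G pG k (G.dist pG a.1) a.1 a.2 rfl
      have hq : ∃ q : F.Walk pF (f.1 a), q.length ≤ k := by
        refine ⟨(w.map f.1).copy (by rw [f.2.2]) rfl, ?_⟩
        rw [SimpleGraph.Walk.length_copy, SimpleGraph.Walk.length_map]
        exact hw.trans (a.2 : a.1 ∈ Stmt3Aux.ball G pG k).2
      obtain ⟨q, hq⟩ := hq
      exact ⟨⟨q⟩, (SimpleGraph.dist_le q).trans hq⟩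
    haveI : Finite ↥(Stmt3Aux.ball G pG k) := (Stmt3Aux.ball_finite G hlfG pG k).to_subtype
    haveI : Finite ↥(Stmt3Aux.ball F pF k) := (Stmt3Aux.ball_finite F hlfF pF k).to_subtype
    refine Finite.of_injective
      (fun (f : Emb k) (a : ↥(Stmt3Aux.ball G pG k)) =>
        (⟨f.1 a, himg f a⟩ : ↥(Stmt3Aux.ball F pF k))) ?_
    intro f g hfg
    refine Subtype.ext (DFunLike.ext _ _ (fun a => ?_))
    exact congrArg Subtype.val (congrFun hfg a)
  haveI hNe : ∀ n : ℕᵒᵖ, Nonempty (Fn.obj n) := by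
    intro n
    obtain ⟨f, hf, hp⟩ := h (Stmt3Aux.ballSub G pG n.unop)
      (Stmt3Aux.ball_finite G hlfG pG n.unop) (Stmt3Aux.ballSub_connected G pG n.unop)
      (Stmt3Aux.pG_mem G pG n.unop)
    exact ⟨⟨f, hf, hp⟩⟩
  obtain ⟨u, hu⟩ := nonempty_sections_of_finite_inverse_system Fn
  have vmem : ∀ v, v ∈ Stmt3Aux.ball G pG (G.dist pG v) :=
    fun v => ⟨hconn.preconnected pG v, le_rfl⟩
  let fv : V → W := fun v => (u (Opposite.op (G.dist pG v))).1 ⟨v, vmem v⟩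
  have key : ∀ (n : ℕ) (v : V) (hv : v ∈ Stmt3Aux.ball G pG n),
      fv v = (u (Opposite.op n)).1 ⟨v, hv⟩ := by
    intro n v hv
    have hle : G.dist pG v ≤ n := hv.2
    have hsec := hu ((CategoryTheory.homOfLE hle).op :
      Opposite.op n ⟶ Opposite.op (G.dist pG v))
    calc fv v = (u (Opposite.op (G.dist pG v))).1 ⟨v, vmem v⟩ := rfl
    _ = (Fn.map (CategoryTheory.homOfLE hle).op (u (Opposite.op n))).1 ⟨v, vmem v⟩ := by
        rw [hsec]
    _ = (u (Opposite.op n)).1 ⟨v, hv⟩ := rfl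
  refine ⟨⟨fv, ?_⟩, ?_, ?_⟩
  · intro a b hab
    have ha : a ∈ Stmt3Aux.ball G pG (max (G.dist pG a) (G.dist pG b)) :=
      ⟨hconn.preconnected pG a, le_max_left _ _⟩
    have hb : b ∈ Stmt3Aux.ball G pG (max (G.dist pG a) (G.dist pG b)) :=
      ⟨hconn.preconnected pG b, le_max_right _ _⟩
    show F.Adj (fv a) (fv b)
    rw [key _ a ha, key _ b hb]
    exact (u (Opposite.op _)).1.map_rel' ⟨ha, hb, by simpa using hab⟩
  · intro a b hab
    have hab' : fv a = fv b := hab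
    have ha : a ∈ Stmt3Aux.ball G pG (max (G.dist pG a) (G.dist pG b)) :=
      ⟨hconn.preconnected pG a, le_max_left _ _⟩
    have hb : b ∈ Stmt3Aux.ball G pG (max (G.dist pG a) (G.dist pG b)) :=
      ⟨hconn.preconnected pG b, le_max_right _ _⟩
    rw [key _ a ha, key _ b hb] at hab'
    exact congrArg Subtype.val ((u (Opposite.op _)).2.1 hab')
  · show fv pG = pF
    exact (u (Opposite.op (G.dist pG pG))).2.2
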